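/- Let m, p ∈ ℕ with m ≥ p, let w_1, …, w_m ∈ ℝ, and let z_1, …, z_m ∈ ℝ^p be vectors such that every set of p distinct vectors among z_1, …, z_m is linearly independent. Then there exist R > 0 and δ > 0 such that for all β ∈ ℝ^p with ‖β‖ ≥ R, the product ∏_{i=1}^m 1/(1 + |w_i − ⟨z_i, β⟩|) is at most 1/(1 + δ‖β‖)^{m − p + 1}. -/

import Mathlib

theorem product_linear_decay (m p : ℕ) (hmp : p ≤ m) (w : Fin m → ℝ)
    (z : Fin m → EuclideanSpace ℝ (Fin p))
    (hz : ∀ s : Finset (Fin m), s.card = p → LinearIndependent ℝ (fun i : s => z i)) :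
    ∃ R > (0 : ℝ), ∃ δ > (0 : ℝ), ∀ β : EuclideanSpace ℝ (Fin p), R ≤ ‖β‖ →
      (∏ i : Fin m, 1 / (1 + |w i - (inner ℝ (z i) β : ℝ)|))
        ≤ 1 / (1 + δ * ‖β‖) ^ (m - p + 1) := by
  rcases Nat.eq_zero_or_pos p with hp0 | hp
  · subst hp0
    refine ⟨1, one_pos, 1, one_pos, fun β hβ => ?_⟩
    have hβ0 : β = 0 := Subsingleton.elim β 0
    rw [hβ0, norm_zero] at hβ
    linarith
  -- zero-inner-product vanishing lemma
  have ortho : ∀ S : Finset (Fin m), S.card = p → ∀ u : EuclideanSpace ℝ (Fin p),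
      (∀ i ∈ S, (inner ℝ (z i) u : ℝ) = 0) → u = 0 := by
    intro S hS u hu
    have hli := hz S hS
    have hcard : Fintype.card S = Module.finrank ℝ (EuclideanSpace ℝ (Fin p)) := by
      simp [Fintype.card_coe, hS, finrank_euclideanSpace_fin]
    haveI : Nonempty S := Finset.Nonempty.to_subtype (Finset.card_pos.mp (hS ▸ hp))
    have hspan := hli.span_eq_top_of_card_eq_finrank hcard
    have h0 : ∀ v ∈ Submodule.span ℝ (Set.range fun i : S => z i), (inner ℝ v u : ℝ) = 0 := by
      intro v hv
      induction hv using Submodule.span_induction with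
      | mem v hv => obtain ⟨i, rfl⟩ := hv; exact hu i i.2
      | zero => simp
      | add v w _ _ h1 h2 => simp [inner_add_left, h1, h2]
      | smul a v _ h1 => simp [inner_smul_left, h1]
    have := h0 u (hspan ▸ Submodule.mem_top)
    exact inner_self_eq_zero.mp this
  -- compactness: per subset of size p
  have key : ∀ S : Finset (Fin m), ∃ c > (0:ℝ), S.card = p →
      ∀ u : EuclideanSpace ℝ (Fin p), ‖u‖ = 1 → c ≤ ∑ i ∈ S, |(inner ℝ (z i) u : ℝ)| := by
    intro S
    by_cases hS : S.card = p
    · have hcont : Continuous fun u : EuclideanSpace ℝ (Fin p) =>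
          ∑ i ∈ S, |(inner ℝ (z i) u : ℝ)| :=
        continuous_finset_sum _ fun i _ => ((continuous_const.inner continuous_id)).abs
      have hne : (Metric.sphere (0 : EuclideanSpace ℝ (Fin p)) 1).Nonempty := by
        refine ⟨EuclideanSpace.single ⟨0, hp⟩ (1:ℝ), ?_⟩
        simp [mem_sphere_iff_norm, EuclideanSpace.norm_single]
      obtain ⟨u0, hu0mem, hmin⟩ :=
        (isCompact_sphere (0 : EuclideanSpace ℝ (Fin p)) 1).exists_isMinOn hne
          hcont.continuousOn
      have hu0 : ‖u0‖ = 1 := by simpa [mem_sphere_iff_norm] using hu0mem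
      refine ⟨∑ i ∈ S, |(inner ℝ (z i) u0 : ℝ)|, ?_, ?_⟩
      · have hnn : (0:ℝ) ≤ ∑ i ∈ S, |(inner ℝ (z i) u0 : ℝ)| :=
          Finset.sum_nonneg fun i _ => abs_nonneg _
        rcases hnn.lt_or_eq with h | h
        · exact h
        · exfalso
          have hz0 : ∀ i ∈ S, (inner ℝ (z i) u0 : ℝ) = 0 := by
            intro i hi
            have := (Finset.sum_eq_zero_iff_of_nonneg (fun i _ => abs_nonneg _)).mp h.symm i hi
            exact abs_eq_zero.mp this
          have := ortho S hS u0 hz0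
          rw [this, norm_zero] at hu0; norm_num at hu0
      · intro _ u hu
        exact hmin (by simp [mem_sphere_iff_norm, hu])
    · exact ⟨1, one_pos, fun h => absurd h hS⟩
  choose cS hcS hcS' using key
  -- uniform constant
  set 𝒮 := (Finset.univ : Finset (Fin m)).powersetCard p with h𝒮
  obtain ⟨S₀, hS₀sub, hS₀card⟩ := Finset.exists_subset_card_eq (s := (Finset.univ : Finset (Fin m))) (n := p)
    (by rw [Finset.card_univ, Fintype.card_fin]; exact hmp)
  have h𝒮ne : 𝒮.Nonempty := ⟨S₀, Finset.mem_powersetCard.mpr ⟨hS₀sub, hS₀card⟩⟩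
  set c := 𝒮.inf' h𝒮ne cS with hc
  have hcpos : 0 < c := (Finset.lt_inf'_iff h𝒮ne).mpr fun S _ => hcS S
  have hcle : ∀ S : Finset (Fin m), S.card = p → c ≤ cS S := fun S hS =>
    Finset.inf'_le _ (Finset.mem_powersetCard.mpr ⟨Finset.subset_univ S, hS⟩)
  set W := ∑ i, |w i| with hW
  have hWnn : 0 ≤ W := Finset.sum_nonneg fun i _ => abs_nonneg _
  have hWle : ∀ i, |w i| ≤ W := fun i =>
    Finset.single_le_sum (fun i _ => abs_nonneg (w i)) (Finset.mem_univ i)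
  have hppos : (0:ℝ) < p := by exact_mod_cast hp
  refine ⟨max 1 (2 * p * W / c), lt_of_lt_of_le one_pos (le_max_left _ _),
    c / (2 * p), by positivity, fun β hβ => ?_⟩
  have hβ1 : (1:ℝ) ≤ ‖β‖ := le_trans (le_max_left _ _) hβ
  have hβpos : 0 < ‖β‖ := lt_of_lt_of_le one_pos hβ1
  have hβW : 2 * p * W / c ≤ ‖β‖ := le_trans (le_max_right _ _) hβ
  -- scaled bound
  have hsum : ∀ S : Finset (Fin m), S.card = p →
      c * ‖β‖ ≤ ∑ i ∈ S, |(inner ℝ (z i) β : ℝ)| := by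
    intro S hS
    set u : EuclideanSpace ℝ (Fin p) := ‖β‖⁻¹ • β with hudef
    have hu : ‖u‖ = 1 := by
      rw [hudef, norm_smul, norm_inv, norm_norm, inv_mul_cancel₀ hβpos.ne']
    have h1 := le_trans (hcle S hS) (hcS' S hS u hu)
    have h2 : ∑ i ∈ S, |(inner ℝ (z i) u : ℝ)| = ‖β‖⁻¹ * ∑ i ∈ S, |(inner ℝ (z i) β : ℝ)| := by
      rw [Finset.mul_sum]
      refine Finset.sum_congr rfl fun i _ => ?_
      rw [hudef, real_inner_smul_right, abs_mul, abs_inv, abs_norm]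
    rw [h2] at h1
    have h3 := mul_le_mul_of_nonneg_right h1 hβpos.le
    calc c * ‖β‖ ≤ (‖β‖⁻¹ * ∑ i ∈ S, |(inner ℝ (z i) β : ℝ)|) * ‖β‖ := h3
    _ = ∑ i ∈ S, |(inner ℝ (z i) β : ℝ)| := by field_simp
  set δ := c / (2 * p) with hδ
  have hδpos : 0 < δ := by positivity
  set D := 1 + δ * ‖β‖ with hD
  have hDpos : (0:ℝ) < D := by positivity
  have hD1 : (1:ℝ) ≤ D := by nlinarith [mul_pos hδpos hβpos]
  set T := Finset.univ.filter (fun i => (c/p) * ‖β‖ ≤ |(inner ℝ (z i) β : ℝ)|) with hT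
  -- card bound
  have hTcard : m - p + 1 ≤ T.card := by
    by_contra hcon
    push_neg at hcon
    have hcompl : p ≤ Tᶜ.card := by
      have h1 : T.card + Tᶜ.card = m := by
        rw [Finset.card_add_card_compl, Fintype.card_fin]
      omega
    obtain ⟨S, hSsub, hScard⟩ := Finset.exists_subset_card_eq (s := Tᶜ) (n := p) hcompl
    have hSne : S.Nonempty := Finset.card_pos.mp (hScard ▸ hp)
    have hlt : ∑ i ∈ S, |(inner ℝ (z i) β : ℝ)| < ∑ i ∈ S, (c/p) * ‖β‖ := by
      refine Finset.sum_lt_sum_of_nonempty hSne fun i hi => ?_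
      have := hSsub hi
      rw [Finset.mem_compl, hT, Finset.mem_filter] at this
      push_neg at this
      exact this (Finset.mem_univ i)
    rw [Finset.sum_const, hScard, nsmul_eq_mul] at hlt
    have : (p:ℝ) * ((c/p) * ‖β‖) = c * ‖β‖ := by field_simp
    rw [this] at hlt
    exact absurd (hsum S hScard) (not_le.mpr hlt)
  -- factor bound on T
  have hfac : ∀ i ∈ T, 1 / (1 + |w i - (inner ℝ (z i) β : ℝ)|) ≤ 1 / D := by
    intro i hi
    rw [hT, Finset.mem_filter] at hi
    have h1 : |(inner ℝ (z i) β : ℝ)| - |w i| ≤ |w i - (inner ℝ (z i) β : ℝ)| := by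
      rw [abs_sub_comm]; exact abs_sub_abs_le_abs_sub _ _
    have h2 : δ * ‖β‖ ≤ |w i - (inner ℝ (z i) β : ℝ)| := by
      have h3 : W ≤ (c / (2*p)) * ‖β‖ := by
        rw [div_le_iff₀ hcpos] at hβW
        rw [div_mul_eq_mul_div, le_div_iff₀ (by positivity)]
        nlinarith
      have := hWle i
      have h4 := hi.2
      have h5 : (c/p) * ‖β‖ - (c/(2*p)) * ‖β‖ = (c/(2*p)) * ‖β‖ := by field_simp; ring
      rw [hδ]
      nlinarith
    refine one_div_le_one_div_of_le hDpos ?_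
    rw [hD]; linarith
  -- assemble
  have hfpos : ∀ i, (0:ℝ) < 1 / (1 + |w i - (inner ℝ (z i) β : ℝ)|) := fun i => by positivity
  have hfle1 : ∀ i, 1 / (1 + |w i - (inner ℝ (z i) β : ℝ)|) ≤ 1 := fun i => by
    rw [div_le_one (by positivity)]; linarith [abs_nonneg (w i - (inner ℝ (z i) β : ℝ))]
  have hsplit : (∏ i : Fin m, 1 / (1 + |w i - (inner ℝ (z i) β : ℝ)|))
      = (∏ i ∈ T, 1 / (1 + |w i - (inner ℝ (z i) β : ℝ)|))
        * ∏ i ∈ Tᶜ, 1 / (1 + |w i - (inner ℝ (z i) β : ℝ)|) :=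
    (Finset.prod_mul_prod_compl T _).symm
  have hTprod : (∏ i ∈ T, 1 / (1 + |w i - (inner ℝ (z i) β : ℝ)|)) ≤ (1/D) ^ T.card := by
    rw [← Finset.prod_const]
    exact Finset.prod_le_prod (fun i _ => (hfpos i).le) hfac
  have hcprod : (∏ i ∈ Tᶜ, 1 / (1 + |w i - (inner ℝ (z i) β : ℝ)|)) ≤ 1 :=
    Finset.prod_le_one (fun i _ => (hfpos i).le) (fun i _ => hfle1 i)
  have hTprodpos : (0:ℝ) ≤ ∏ i ∈ T, 1 / (1 + |w i - (inner ℝ (z i) β : ℝ)|) :=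
    Finset.prod_nonneg fun i _ => (hfpos i).le
  calc (∏ i : Fin m, 1 / (1 + |w i - (inner ℝ (z i) β : ℝ)|))
      ≤ (∏ i ∈ T, 1 / (1 + |w i - (inner ℝ (z i) β : ℝ)|)) := by
        rw [hsplit]
        nlinarith [Finset.prod_nonneg (fun i (_ : i ∈ Tᶜ) =>
          (hfpos i).le)]
    _ ≤ (1/D) ^ T.card := hTprod
    _ ≤ (1/D) ^ (m - p + 1) := by
        refine pow_le_pow_of_le_one (by positivity) ?_ hTcard
        rw [div_le_one hDpos]; exact hD1
    _ = 1 / D ^ (m - p + 1) := one_div_pow _ _
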